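/- Let E be a complete normed vector space over ℝ, μ > 0, C ≥ 0, let A : [0,∞) → (continuous linear endomorphisms of E) be continuous with ‖A(t)‖ ≤ C (1+t)^{−1−μ} for all t ≥ 0, and let u : [0,∞) → E be differentiable with u′(t) = A(t)(u(t)) for all t ≥ 0. Then: (1) ‖u(t)‖ ≤ exp(C/μ) ‖u(0)‖ for all t ≥ 0; (2) there exists u∞ ∈ E with u(t) → u∞ as t → +∞; (3) ‖u(t) − u∞‖ ≤ (C/μ) exp(C/μ) ‖u(0)‖ (1+t)^{−μ} for all t ≥ 0. -/

import Mathlib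

open Filter Set

private lemma aux_pow_deriv (μ : ℝ) {t : ℝ} (ht : 0 ≤ t) :
    HasDerivAt (fun r : ℝ => (1 + r) ^ (-μ)) (-μ * (1 + t) ^ (-μ - 1)) t := by
  have h1 : HasDerivAt (fun r : ℝ => 1 + r) 1 t := (hasDerivAt_id t).const_add 1
  have hne : (1 : ℝ) + t ≠ 0 := by linarith
  have h2 := (Real.hasDerivAt_rpow_const (p := -μ) (x := 1 + t) (Or.inl hne)).comp t h1
  simpa [Function.comp_def] using h2

private lemma aux_pow_contOn (μ : ℝ) {s : Set ℝ} (hs : s ⊆ Ici 0) :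
    ContinuousOn (fun r : ℝ => (1 + r) ^ (-μ)) s := by
  apply (continuousOn_const.add continuousOn_id).rpow_const
  intro x hx
  have : (0:ℝ) ≤ x := hs hx
  exact Or.inl (by simp only [Pi.add_apply, id]; intro h; linarith)

private lemma aux_integral (μ K : ℝ) (hμ : 0 < μ) {t s : ℝ} (ht : 0 ≤ t) (hts : t ≤ s) :
    ∫ r in t..s, K * (1 + r) ^ (-1 - μ) =
      K / μ * ((1 + t) ^ (-μ) - (1 + s) ^ (-μ)) := by
  have hF : ∀ r ∈ Set.uIcc t s,
      HasDerivAt (fun r : ℝ => -(K / μ) * (1 + r) ^ (-μ)) (K * (1 + r) ^ (-1 - μ)) r := by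
    intro r hr
    rw [Set.uIcc_of_le hts] at hr
    have h0 : (0:ℝ) ≤ r := le_trans ht hr.1
    have := (aux_pow_deriv μ h0).const_mul (-(K / μ))
    refine this.congr_deriv ?_
    have : -μ - 1 = -1 - μ := by ring
    rw [this]
    field_simp
  have hint : IntervalIntegrable (fun r : ℝ => K * (1 + r) ^ (-1 - μ)) MeasureTheory.volume t s := by
    apply ContinuousOn.intervalIntegrable
    apply continuousOn_const.mul
    have : -1 - μ = -(1 + μ) := by ring
    rw [this]
    apply aux_pow_contOn
    rw [Set.uIcc_of_le hts]
    exact fun x hx => le_trans ht hx.1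
  rw [intervalIntegral.integral_eq_sub_of_hasDerivAt hF hint]
  ring

theorem linear_ode_decay_limit {E : Type*} [NormedAddCommGroup E] [NormedSpace ℝ E]
    [CompleteSpace E] (μ C : ℝ) (hμ : 0 < μ) (hC : 0 ≤ C)
    (A : ℝ → E →L[ℝ] E) (hAcont : ContinuousOn A (Ici 0))
    (hAbound : ∀ t, 0 ≤ t → ‖A t‖ ≤ C * (1 + t) ^ (-1 - μ))
    (u : ℝ → E) (hu : ∀ t, 0 ≤ t → HasDerivAt u (A t (u t)) t) :
    (∀ t, 0 ≤ t → ‖u t‖ ≤ Real.exp (C / μ) * ‖u 0‖) ∧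
    ∃ uinf : E, Tendsto u atTop (nhds uinf) ∧
      ∀ t, 0 ≤ t → ‖u t - uinf‖ ≤ (C / μ) * Real.exp (C / μ) * ‖u 0‖ * (1 + t) ^ (-μ) := by
  have hucont : ContinuousOn u (Ici 0) :=
    fun t ht => ((hu t ht).continuousAt).continuousWithinAt
  -- Step 1: Gronwall-type bound with ε-margins
  have key1 : ∀ ε > (0:ℝ), ∀ t, 0 ≤ t →
      ‖u t‖ ≤ (‖u 0‖ + ε) * Real.exp ((C + ε) / μ * (1 - (1 + t) ^ (-μ))) := by
    intro ε hε t ht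
    set B : ℝ → ℝ := fun r => (‖u 0‖ + ε) * Real.exp ((C + ε) / μ * (1 - (1 + r) ^ (-μ))) with hBdef
    set B' : ℝ → ℝ := fun r => B r * ((C + ε) * (1 + r) ^ (-μ - 1)) with hB'def
    have hBpos : ∀ r, 0 < B r := fun r => by positivity
    have hB' : ∀ x ∈ Ico (0:ℝ) t, HasDerivWithinAt B (B' x) (Ici x) x := by
      intro x hx
      have h1 : HasDerivAt (fun r : ℝ => 1 - (1 + r) ^ (-μ)) (μ * (1 + x) ^ (-μ - 1)) x := by
        have := (aux_pow_deriv μ hx.1).const_sub 1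
        simpa using this
      have h2 := (h1.const_mul ((C + ε) / μ)).exp.const_mul (‖u 0‖ + ε)
      have : B' x = (‖u 0‖ + ε) * (Real.exp ((C + ε) / μ * (1 - (1 + x) ^ (-μ))) *
          ((C + ε) / μ * (μ * (1 + x) ^ (-μ - 1)))) := by
        rw [hB'def, hBdef]
        field_simp
      rw [this]
      exact h2.hasDerivWithinAt
    have hBcont : ContinuousOn B (Icc 0 t) := by
      apply continuousOn_const.mul
      apply Real.continuous_exp.comp_continuousOn
      apply continuousOn_const.mul
      exact continuousOn_const.sub (aux_pow_contOn μ (fun x hx => hx.1))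
    have ha : ‖u 0‖ ≤ B 0 := by
      simp only [hBdef, add_zero, Real.one_rpow, sub_self, mul_zero, Real.exp_zero, mul_one]
      linarith
    have bound : ∀ x ∈ Ico (0:ℝ) t, ‖u x‖ = B x → ‖A x (u x)‖ < B' x := by
      intro x hx heq
      have hp : (0:ℝ) < (1 + x) ^ (-μ - 1) := Real.rpow_pos_of_pos (by linarith [hx.1]) _
      have h1 : ‖A x (u x)‖ ≤ ‖A x‖ * ‖u x‖ := (A x).le_opNorm _
      have h2 : ‖A x‖ * ‖u x‖ ≤ C * (1 + x) ^ (-1 - μ) * B x := by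
        rw [heq]
        exact mul_le_mul_of_nonneg_right (hAbound x hx.1) (hBpos x).le
      have he : (-1 - μ : ℝ) = -μ - 1 := by ring
      rw [he] at h2
      have hlt : C * (1 + x) ^ (-μ - 1) < (C + ε) * (1 + x) ^ (-μ - 1) :=
        mul_lt_mul_of_pos_right (by linarith) hp
      have h3 : C * (1 + x) ^ (-μ - 1) * B x < B x * ((C + ε) * (1 + x) ^ (-μ - 1)) := by
        calc C * (1 + x) ^ (-μ - 1) * B x
            < (C + ε) * (1 + x) ^ (-μ - 1) * B x :=
              mul_lt_mul_of_pos_right hlt (hBpos x)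
          _ = B x * ((C + ε) * (1 + x) ^ (-μ - 1)) := by ring
      simp only [hB'def]
      linarith
    have := image_norm_le_of_norm_deriv_right_lt_deriv_boundary'
      (f := u) (f' := fun r => A r (u r)) (a := 0) (b := t)
      (hucont.mono (fun x hx => hx.1))
      (fun x hx => (hu x hx.1).hasDerivWithinAt) ha hBcont hB' bound
    exact this ⟨ht, le_refl t⟩
  -- Step 1': pass to the limit ε → 0⁺
  have part1 : ∀ t, 0 ≤ t → ‖u t‖ ≤ Real.exp (C / μ) * ‖u 0‖ := by
    intro t ht
    have hlim : Tendsto (fun ε : ℝ => (‖u 0‖ + ε) * Real.exp ((C + ε) / μ))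
        (nhdsWithin 0 (Ioi 0)) (nhds ((‖u 0‖ + 0) * Real.exp ((C + 0) / μ))) := by
      apply Tendsto.mono_left _ nhdsWithin_le_nhds
      exact (Continuous.tendsto (by continuity) 0)
    have hev : ∀ᶠ ε in nhdsWithin (0:ℝ) (Ioi 0),
        ‖u t‖ ≤ (‖u 0‖ + ε) * Real.exp ((C + ε) / μ) := by
      filter_upwards [self_mem_nhdsWithin] with ε hε
      have hε' : (0:ℝ) < ε := hε
      have h1 := key1 ε hε' t ht
      have h2 : (C + ε) / μ * (1 - (1 + t) ^ (-μ)) ≤ (C + ε) / μ := by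
        have hp : (0:ℝ) < (1 + t) ^ (-μ) := Real.rpow_pos_of_pos (by linarith) _
        have hle : (0:ℝ) ≤ (C + ε) / μ := div_nonneg (by linarith) hμ.le
        nlinarith
      calc ‖u t‖ ≤ (‖u 0‖ + ε) * Real.exp ((C + ε) / μ * (1 - (1 + t) ^ (-μ))) := h1
        _ ≤ (‖u 0‖ + ε) * Real.exp ((C + ε) / μ) := by
            apply mul_le_mul_of_nonneg_left (Real.exp_le_exp.2 h2)
              (by linarith [norm_nonneg (u 0)])
    have := ge_of_tendsto hlim hev
    simpa [mul_comm] using this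
  -- Step 2: decay of differences
  set K : ℝ := C * (Real.exp (C / μ) * ‖u 0‖) with hKdef
  have hK0 : 0 ≤ K := by positivity
  have hdbound : ∀ r, 0 ≤ r → ‖A r (u r)‖ ≤ K * (1 + r) ^ (-1 - μ) := by
    intro r hr
    calc ‖A r (u r)‖ ≤ ‖A r‖ * ‖u r‖ := (A r).le_opNorm _
      _ ≤ (C * (1 + r) ^ (-1 - μ)) * (Real.exp (C / μ) * ‖u 0‖) :=
          mul_le_mul (hAbound r hr) (part1 r hr) (norm_nonneg _)
            (by positivity)
      _ = K * (1 + r) ^ (-1 - μ) := by rw [hKdef]; ring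
  have hdiff : ∀ t s : ℝ, 0 ≤ t → t ≤ s → ‖u s - u t‖ ≤ K / μ * (1 + t) ^ (-μ) := by
    intro t s ht hts
    have huIcc : Set.uIcc t s = Icc t s := Set.uIcc_of_le hts
    have hintc : ContinuousOn (fun r => A r (u r)) (Set.uIcc t s) := by
      rw [huIcc]
      have hsub : Icc t s ⊆ Ici 0 := fun x hx => le_trans ht hx.1
      exact (hAcont.mono hsub).clm_apply (hucont.mono hsub)
    have hint : IntervalIntegrable (fun r => A r (u r)) MeasureTheory.volume t s :=
      hintc.intervalIntegrable
    have ftc : ∫ r in t..s, A r (u r) = u s - u t := by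
      apply intervalIntegral.integral_eq_sub_of_hasDerivAt
      · intro r hr
        rw [huIcc] at hr
        exact hu r (le_trans ht hr.1)
      · exact hint
    have hgint : IntervalIntegrable (fun r : ℝ => K * (1 + r) ^ (-1 - μ))
        MeasureTheory.volume t s := by
      apply ContinuousOn.intervalIntegrable
      apply continuousOn_const.mul
      have he : (-1 - μ : ℝ) = -(1 + μ) := by ring
      rw [he]
      apply aux_pow_contOn
      rw [huIcc]
      exact fun x hx => le_trans ht hx.1
    have hae : ∀ᵐ r ∂(MeasureTheory.volume.restrict (Set.uIoc t s)),
        ‖A r (u r)‖ ≤ K * (1 + r) ^ (-1 - μ) := by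
      filter_upwards [MeasureTheory.ae_restrict_mem measurableSet_uIoc] with r hr
      have : t < r := by
        have := hr.1
        rwa [min_eq_left hts] at this
      exact hdbound r (le_trans ht this.le)
    have hnorm := intervalIntegral.norm_integral_le_abs_of_norm_le hae hgint
    rw [ftc, aux_integral μ K hμ ht hts] at hnorm
    have hval : K / μ * ((1 + t) ^ (-μ) - (1 + s) ^ (-μ)) ≤ K / μ * (1 + t) ^ (-μ) := by
      have hp : (0:ℝ) ≤ (1 + s) ^ (-μ) := (Real.rpow_pos_of_pos (by linarith) _).le
      have : (0:ℝ) ≤ K / μ := by positivity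
      nlinarith
    have habs : |K / μ * ((1 + t) ^ (-μ) - (1 + s) ^ (-μ))| =
        K / μ * ((1 + t) ^ (-μ) - (1 + s) ^ (-μ)) := by
      apply abs_of_nonneg
      have hp : (1 + s) ^ (-μ) ≤ (1 + t) ^ (-μ) :=
        Real.rpow_le_rpow_of_nonpos (by linarith) (by linarith) (by linarith)
      have : (0:ℝ) ≤ K / μ := by positivity
      nlinarith
    rw [habs] at hnorm
    linarith
  -- Cauchy sequence and limit
  have hanti : ∀ {a b : ℝ}, 0 ≤ a → a ≤ b → (1 + b) ^ (-μ) ≤ (1 + a) ^ (-μ) :=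
    fun {a b} ha hab =>
      Real.rpow_le_rpow_of_nonpos (by linarith) (by linarith) (by linarith)
  have hcau : CauchySeq (fun n : ℕ => u n) := by
    apply cauchySeq_of_le_tendsto_0 (fun N : ℕ => K / μ * (1 + (N:ℝ)) ^ (-μ))
    · intro n m N hn hm
      rcases le_total n m with h | h
      · calc dist (u n) (u m) = ‖u m - u n‖ := by rw [dist_eq_norm, norm_sub_rev]
          _ ≤ K / μ * (1 + (n:ℝ)) ^ (-μ) := hdiff n m (Nat.cast_nonneg n) (by exact_mod_cast h)
          _ ≤ K / μ * (1 + (N:ℝ)) ^ (-μ) := by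
              apply mul_le_mul_of_nonneg_left
                (hanti (Nat.cast_nonneg N) (by exact_mod_cast hn)) (by positivity)
      · calc dist (u n) (u m) = ‖u n - u m‖ := dist_eq_norm _ _
          _ ≤ K / μ * (1 + (m:ℝ)) ^ (-μ) := hdiff m n (Nat.cast_nonneg m) (by exact_mod_cast h)
          _ ≤ K / μ * (1 + (N:ℝ)) ^ (-μ) := by
              apply mul_le_mul_of_nonneg_left
                (hanti (Nat.cast_nonneg N) (by exact_mod_cast hm)) (by positivity)
    · have h1 : Tendsto (fun N : ℕ => (1 + (N:ℝ))) atTop atTop :=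
        tendsto_atTop_add_const_left _ _ tendsto_natCast_atTop_atTop
      have h2 : Tendsto (fun N : ℕ => (1 + (N:ℝ)) ^ (-μ)) atTop (nhds 0) :=
        (tendsto_rpow_neg_atTop hμ).comp h1
      simpa using h2.const_mul (K / μ)
  obtain ⟨uinf, hlim⟩ := cauchySeq_tendsto_of_complete hcau
  refine ⟨part1, ?_⟩
  have htail : ∀ t : ℝ, 0 ≤ t → ‖u t - uinf‖ ≤ K / μ * (1 + t) ^ (-μ) := by
    intro t ht
    have hlim2 : Tendsto (fun n : ℕ => ‖u t - u n‖) atTop (nhds ‖u t - uinf‖) :=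
      (tendsto_const_nhds.sub hlim).norm
    apply le_of_tendsto hlim2
    filter_upwards [eventually_ge_atTop ⌈t⌉₊] with n hn
    have htn : t ≤ (n:ℝ) := le_trans (Nat.le_ceil t) (by exact_mod_cast hn)
    rw [norm_sub_rev]
    exact hdiff t n ht htn
  refine ⟨uinf, ?_, ?_⟩
  · rw [tendsto_iff_norm_sub_tendsto_zero]
    refine squeeze_zero_norm' (a := fun t : ℝ => K / μ * (1 + t) ^ (-μ)) ?_ ?_
    · filter_upwards [eventually_ge_atTop (0:ℝ)] with t ht
      rw [norm_norm]
      exact htail t ht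
    · have h1 : Tendsto (fun t : ℝ => (1 + t)) atTop atTop :=
        tendsto_atTop_add_const_left _ _ tendsto_id
      have h2 : Tendsto (fun t : ℝ => (1 + t) ^ (-μ)) atTop (nhds 0) :=
        (tendsto_rpow_neg_atTop hμ).comp h1
      simpa using h2.const_mul (K / μ)
  · intro t ht
    have h := htail t ht
    have heq : K / μ * (1 + t) ^ (-μ) =
        (C / μ) * Real.exp (C / μ) * ‖u 0‖ * (1 + t) ^ (-μ) := by
      rw [hKdef]; ring
    rw [← heq]
    exact h
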